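/- For every λ ∈ ℂ with λ ≠ 1, every integer n ≥ 1, every a ∈ ℤ_{≥0}, every b ∈ ℂ with b ≠ 0, and all x, the identity (x - bn)^{n-1} = Σ_{l=0}^{an} Σ_{k=0}^{n-1-l} Σ_{j=0}^{k} ( C(an, l) · C(k, j) · ((n-1)_{k+l}/k!) / ( C(j+l, l) · (1-λ)^{l} ) ) · S₂(j+l, l) · (-1)^{k-j} · (nb)^{k-j} · H_{n-1-l-k}^{(an)}(x|λ) holds as an identity of polynomials in x, where (m)_r = m(m-1)⋯(m-r+1) denotes the falling factorial. -/

import Mathlib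

/-- The formal power series `e^{ct} = ∑_{m≥0} c^m t^m / m!` over `ℂ`. -/
noncomputable def expPS (c : ℂ) : PowerSeries ℂ :=
  PowerSeries.mk fun m => c ^ m / (m.factorial : ℂ)

open Finset


lemma expPS_eq_rescale (c : ℂ) : expPS c = PowerSeries.rescale c (PowerSeries.exp ℂ) := by
  ext m
  rw [PowerSeries.coeff_rescale, PowerSeries.coeff_exp, expPS, PowerSeries.coeff_mk]
  push_cast
  ring

lemma expPS_mul (c d : ℂ) : expPS c * expPS d = expPS (c + d) := by
  rw [expPS_eq_rescale, expPS_eq_rescale, expPS_eq_rescale,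
    PowerSeries.exp_mul_exp_eq_exp_add]

lemma expPS_sub_one_coeff_lt (l i : ℕ) (h : i < l) :
    PowerSeries.coeff i ((expPS 1 - 1) ^ l) = 0 := by
  have hX : (PowerSeries.X : PowerSeries ℂ) ∣ (expPS 1 - 1) := by
    rw [PowerSeries.X_dvd_iff]
    have : PowerSeries.constantCoeff (expPS 1) = 1 := by
      rw [← PowerSeries.coeff_zero_eq_constantCoeff_apply, expPS, PowerSeries.coeff_mk]
      simp
    rw [map_sub, this, map_one, sub_self]
  exact (PowerSeries.X_pow_dvd_iff.mp (pow_dvd_pow_of_dvd hX l)) i h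


theorem scalar_id (lam c : ℂ) (hlam : (1:ℂ) - lam ≠ 0) (S2 : ℕ → ℕ → ℂ) (G : ℕ → ℂ)
    (M α l j p : ℕ) (hl : l ≤ α) (hlM : l ≤ M) (hj : j ≤ M - l) (hp : p ≤ M - l - j) :
    (M.factorial : ℂ) / (1-lam)^α * ((α.choose l : ℂ) * (l.factorial : ℂ) * (1-lam)^(α-l)) *
      (S2 (l+j) l / ((l+j).factorial : ℂ) * ((-c)^p / (p.factorial : ℂ) *
        (G (M - (l+j) - p) / ((M - (l+j) - p).factorial : ℂ)))) =
    (α.choose l : ℂ) * ((j+p).choose j : ℂ) *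
      ((M.descFactorial ((j+p)+l) : ℂ) / ((j+p).factorial : ℂ)) /
      (((j+l).choose l : ℂ) * (1-lam)^l) *
      S2 (j+l) l * (-1)^((j+p)-j) * c^((j+p)-j) * G (M - l - (j+p)) := by
  rw [add_comm l j, show M - (j+l) - p = M - l - (j+p) from by omega]
  generalize S2 (j+l) l = s
  generalize G (M - l - (j+p)) = g
  have hq : M - l - (j+p) = M - (j+p+l) := by omega
  have hd : ((M - (j+p+l)).factorial) * M.descFactorial (j+p+l) = M.factorial :=
    Nat.factorial_mul_descFactorial (by omega)
  have hc1 : (j+p).choose j * (j.factorial * ((j+p)-j).factorial) = (j+p).factorial := by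
    rw [← mul_assoc]; exact Nat.choose_mul_factorial_mul_factorial (by omega)
  have hc2 : (j+l).choose l * (l.factorial * ((j+l)-l).factorial) = (j+l).factorial := by
    rw [← mul_assoc, mul_comm ((j+l).choose l) _, mul_comm (l.factorial) _, mul_assoc]
    have := Nat.choose_mul_factorial_mul_factorial (show l ≤ j + l by omega)
    linarith [this]
  have hjp : (j+p) - j = p := by omega
  have hjl : (j+l) - l = j := by omega
  rw [hjp] at hc1
  rw [hjl] at hc2
  have hpow : (1-lam)^(α-l) * (1-lam)^l = (1-lam)^α := by
    rw [← pow_add]; congr 1; omega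
  rw [hq, hjp]
  have hd' : ((M - (j+p+l)).factorial : ℂ) * (M.descFactorial (j+p+l) : ℂ) = (M.factorial : ℂ) := by
    exact_mod_cast congrArg (Nat.cast : ℕ → ℂ) hd
  have hc1' : ((j+p).choose j : ℂ) * ((j.factorial : ℂ) * (p.factorial : ℂ)) = ((j+p).factorial : ℂ) := by
    exact_mod_cast congrArg (Nat.cast : ℕ → ℂ) hc1
  have hc2' : ((j+l).choose l : ℂ) * ((l.factorial : ℂ) * (j.factorial : ℂ)) = ((j+l).factorial : ℂ) := by
    exact_mod_cast congrArg (Nat.cast : ℕ → ℂ) hc2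
  have f1 : ((j+l).factorial : ℂ) ≠ 0 := Nat.cast_ne_zero.2 (Nat.factorial_ne_zero _)
  have f2 : ((p).factorial : ℂ) ≠ 0 := Nat.cast_ne_zero.2 (Nat.factorial_ne_zero _)
  have f3 : (((M - (j+p+l))).factorial : ℂ) ≠ 0 := Nat.cast_ne_zero.2 (Nat.factorial_ne_zero _)
  have f4 : ((j+p).factorial : ℂ) ≠ 0 := Nat.cast_ne_zero.2 (Nat.factorial_ne_zero _)
  have f5 : ((j+l).choose l : ℂ) ≠ 0 := Nat.cast_ne_zero.2 (Nat.choose_pos (by omega)).ne'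
  have f6 : (1-lam)^l ≠ 0 := pow_ne_zero _ hlam
  have f7 : (1-lam)^α ≠ 0 := pow_ne_zero _ hlam
  have f8 : ((j).factorial : ℂ) ≠ 0 := Nat.cast_ne_zero.2 (Nat.factorial_ne_zero _)
  have f9 : ((l).factorial : ℂ) ≠ 0 := Nat.cast_ne_zero.2 (Nat.factorial_ne_zero _)
  rw [show ((-c)^p : ℂ) = (-1:ℂ)^p * c^p from by rw [neg_pow]]
  field_simp
  rw [← hpow, ← hd', ← hc1', ← hc2']
  ring


lemma shift_sum (M l : ℕ) (hlM : l ≤ M) (f : ℕ → ℂ) (hf : ∀ i < l, f i = 0) :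
    ∑ i ∈ range (M+1), f i = ∑ j ∈ range (M - l + 1), f (l+j) := by
  rw [range_eq_Ico, ← Finset.sum_Ico_consecutive _ (Nat.zero_le l) (show l ≤ M + 1 by omega)]
  rw [Finset.sum_eq_zero (fun i hi => hf i (by simpa [Finset.mem_Ico] using hi)), zero_add,
    Finset.sum_Ico_eq_sum_range, show M + 1 - l = M - l + 1 from by omega, range_eq_Ico]

lemma tri_swap (N : ℕ) (f : ℕ → ℕ → ℂ) :
    ∑ k ∈ range (N+1), ∑ j ∈ range (k+1), f k j
      = ∑ j ∈ range (N+1), ∑ p ∈ range (N+1-j), f (j+p) j := by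
  simp only [range_eq_Ico]
  rw [← sum_Ico_Ico_comm]
  apply Finset.sum_congr rfl
  intro j hj
  rw [Finset.sum_Ico_eq_sum_range, range_eq_Ico]

theorem perl (lam c : ℂ) (hlam : (1:ℂ) - lam ≠ 0) (S2 : ℕ → ℕ → ℂ)
    (hS2v : ∀ i l : ℕ, i < l → S2 i l = 0) (G : ℕ → ℂ) (M α l : ℕ) (hl : l ≤ α) :
    (M.factorial : ℂ) / (1-lam)^α * ((α.choose l : ℂ) * (l.factorial : ℂ) * (1-lam)^(α-l)) *
      ∑ i ∈ range (M+1), S2 i l / (i.factorial : ℂ) *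
        ∑ p ∈ range (M - i + 1), (-c)^p / (p.factorial : ℂ) *
          (G (M - i - p) / ((M - i - p).factorial : ℂ)) =
    ∑ k ∈ range (M - l + 1), ∑ j ∈ range (k+1),
      (α.choose l : ℂ) * (k.choose j : ℂ) *
        ((M.descFactorial (k+l) : ℂ) / (k.factorial : ℂ)) /
        (((j+l).choose l : ℂ) * (1-lam)^l) *
        S2 (j+l) l * (-1)^(k-j) * c^(k-j) * G (M - l - k) := by
  by_cases hlM : M < l
  · have hML : M - l = 0 := by omega
    rw [hML]
    have hL : ∑ i ∈ range (M+1), S2 i l / (i.factorial : ℂ) *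
        ∑ p ∈ range (M - i + 1), (-c)^p / (p.factorial : ℂ) *
          (G (M - i - p) / ((M - i - p).factorial : ℂ)) = 0 := by
      apply Finset.sum_eq_zero
      intro i hi
      rw [hS2v i l (by simp only [Finset.mem_range] at hi; omega), zero_div, zero_mul]
    rw [hL, mul_zero]
    symm
    apply Finset.sum_eq_zero; intro k hk
    apply Finset.sum_eq_zero; intro j hj
    simp only [Finset.mem_range, Nat.lt_one_iff] at hk
    have hk0 : k = 0 := by omega
    subst hk0
    rw [Nat.descFactorial_eq_zero_iff_lt.2 (show M < 0 + l by omega)]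
    simp
  · push_neg at hlM
    rw [shift_sum M l hlM _ (fun i hi => by rw [hS2v i l hi, zero_div, zero_mul])]
    have hb : M - l + 1 = (M - l) + 1 := rfl
    rw [tri_swap (M - l)]
    rw [Finset.mul_sum]
    apply Finset.sum_congr rfl
    intro j hj
    simp only [Finset.mem_range] at hj
    rw [show M - l + 1 - j = M - l - j + 1 from by omega,
      show M - (l + j) + 1 = M - l - j + 1 from by omega, Finset.mul_sum, Finset.mul_sum]
    apply Finset.sum_congr rfl
    intro p hp
    simp only [Finset.mem_range] at hp
    exact scalar_id lam c hlam S2 G M α l j p hl hlM (by omega) (by omega)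

lemma coeff_triple (M : ℕ) (f g h : ℕ → ℂ) :
    PowerSeries.coeff M (PowerSeries.mk f * (PowerSeries.mk g * PowerSeries.mk h)) =
    ∑ i ∈ range (M+1), f i * ∑ p ∈ range (M - i + 1), g p * h (M - i - p) := by
  rw [PowerSeries.coeff_mul, Finset.Nat.sum_antidiagonal_eq_sum_range_succ_mk]
  refine sum_congr rfl fun i hi => ?_
  rw [PowerSeries.coeff_mk, PowerSeries.coeff_mul,
    Finset.Nat.sum_antidiagonal_eq_sum_range_succ_mk]
  refine congrArg _ (sum_congr rfl fun p hp => ?_)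
  rw [PowerSeries.coeff_mk, PowerSeries.coeff_mk]

/-- For `λ ≠ 1`, `n ≥ 1`, `a ∈ ℤ_{≥0}`, `b ≠ 0` and all `x`,
`(x - bn)^{n-1} = ∑_{l=0}^{an} ∑_{k=0}^{n-1-l} ∑_{j=0}^{k}
  (C(an,l) C(k,j) ((n-1)_{k+l}/k!) / (C(j+l,l) (1-λ)^l))
  S₂(j+l,l) (-1)^{k-j} (nb)^{k-j} H_{n-1-l-k}^{(an)}(x|λ)`,
where `(m)_r` is the falling factorial. Here `H_m^{(α)}(x|λ)` is characterized by
`((1-λ)/(e^t-λ))^α e^{xt} = ∑_m H_m^{(α)}(x|λ) t^m/m!` and the Stirling numbers of the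
second kind `S₂(l,m)` by `(e^t-1)^m = m! ∑_l S₂(l,m) t^l/l!`. -/
theorem stmt8 (lam : ℂ) (hlam : lam ≠ 1) (n : ℕ) (hn : 1 ≤ n) (a : ℕ) (b : ℂ) (hb : b ≠ 0)
    (H : ℕ → ℕ → ℂ → ℂ)
    (hH : ∀ (α : ℕ) (x : ℂ),
      (expPS 1 - PowerSeries.C lam) ^ α *
          PowerSeries.mk (fun m => H α m x / (m.factorial : ℂ)) =
        PowerSeries.C (1 - lam) ^ α * expPS x)
    (S2 : ℕ → ℕ → ℂ)
    (hS2 : ∀ m : ℕ,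
      (expPS 1 - 1) ^ m =
        PowerSeries.C (m.factorial : ℂ) *
          PowerSeries.mk (fun l => S2 l m / (l.factorial : ℂ))) :
    ∀ x : ℂ,
      (x - b * n) ^ (n - 1) =
        ∑ l ∈ Finset.range (a * n + 1), ∑ k ∈ Finset.range (n - 1 - l + 1),
          ∑ j ∈ Finset.range (k + 1),
            ((a * n).choose l : ℂ) * (k.choose j : ℂ) *
                (((n - 1).descFactorial (k + l) : ℂ) / (k.factorial : ℂ)) /
                (((j + l).choose l : ℂ) * (1 - lam) ^ l) *
              S2 (j + l) l * (-1) ^ (k - j) * ((n : ℂ) * b) ^ (k - j) *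
              H (a * n) (n - 1 - l - k) x := by
  intro x
  have hone : (1:ℂ) - lam ≠ 0 := sub_ne_zero.2 (Ne.symm hlam)
  have hS2v : ∀ i l : ℕ, i < l → S2 i l = 0 := by
    intro i l h
    have h1 := congrArg (PowerSeries.coeff i) (hS2 l)
    rw [expPS_sub_one_coeff_lt l i h, PowerSeries.coeff_C_mul, PowerSeries.coeff_mk] at h1
    have hf : ((l.factorial : ℂ)) ≠ 0 := Nat.cast_ne_zero.2 (Nat.factorial_ne_zero _)
    have hi : ((i.factorial : ℂ)) ≠ 0 := Nat.cast_ne_zero.2 (Nat.factorial_ne_zero _)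
    rw [eq_comm, mul_eq_zero, div_eq_zero_iff] at h1
    rcases h1 with h2 | h2 | h2
    · exact absurd h2 hf
    · exact h2
    · exact absurd h2 hi
  have key : PowerSeries.C ((1-lam)^(a*n)) * expPS (x - b*(n:ℂ)) =
      ∑ l ∈ range (a*n+1),
        PowerSeries.C ((1-lam)^(a*n-l) * (((a*n).choose l : ℕ):ℂ) * ((l.factorial : ℕ):ℂ)) *
          (PowerSeries.mk (fun i => S2 i l / (i.factorial : ℂ)) *
            (expPS (-((n:ℂ)*b)) *
              PowerSeries.mk (fun m => H (a*n) m x / (m.factorial : ℂ)))) := by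
    have e1 : expPS (x - b*(n:ℂ)) = expPS x * expPS (-((n:ℂ)*b)) := by
      rw [expPS_mul]; congr 1; ring
    have e3 : (expPS 1 - PowerSeries.C lam)^(a*n) =
        ∑ l ∈ range (a*n+1),
          PowerSeries.C ((1-lam)^(a*n-l) * (((a*n).choose l : ℕ):ℂ) * ((l.factorial : ℕ):ℂ)) *
            PowerSeries.mk (fun i => S2 i l / (i.factorial : ℂ)) := by
      have e0 : expPS 1 - PowerSeries.C lam = (expPS 1 - 1) + PowerSeries.C (1-lam) := by
        rw [map_sub, map_one]; ring
      rw [e0, add_pow]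
      refine sum_congr rfl fun l hl => ?_
      rw [hS2 l, ← map_pow,
        show (((a*n).choose l : ℕ) : PowerSeries ℂ) = PowerSeries.C ((((a*n).choose l : ℕ)):ℂ)
          from (map_natCast (PowerSeries.C) _).symm]
      have merge : ∀ (u v w : ℂ) (m : PowerSeries ℂ),
          (PowerSeries.C u * m) * PowerSeries.C v * PowerSeries.C w =
            PowerSeries.C (v * w * u) * m := by
        intro u v w m; rw [map_mul, map_mul]; ring
      exact merge _ _ _ _
    calc PowerSeries.C ((1-lam)^(a*n)) * expPS (x - b*(n:ℂ))
        = (PowerSeries.C (1-lam))^(a*n) * expPS x * expPS (-((n:ℂ)*b)) := by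
          rw [e1, map_pow, mul_assoc]
      _ = (expPS 1 - PowerSeries.C lam)^(a*n) *
            PowerSeries.mk (fun m => H (a*n) m x / (m.factorial : ℂ)) * expPS (-((n:ℂ)*b)) := by
          rw [hH (a*n) x]
      _ = _ := by
          rw [e3, Finset.sum_mul, Finset.sum_mul]
          exact sum_congr rfl fun l hl => by ring
  have hco := congrArg (PowerSeries.coeff (n-1)) key
  rw [map_sum] at hco
  simp only [PowerSeries.coeff_C_mul, expPS, coeff_triple, PowerSeries.coeff_mk] at hco
  -- hco : (1-lam)^(a*n) * ((x - b*n)^(n-1) / (n-1)!) = ∑ l, c_l * (triple sum)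
  have hMf : (((n-1).factorial : ℕ) : ℂ) ≠ 0 := Nat.cast_ne_zero.2 (Nat.factorial_ne_zero _)
  have hpow : ((1:ℂ)-lam)^(a*n) ≠ 0 := pow_ne_zero _ hone
  have h2 : (x - b*(n:ℂ))^(n-1) =
      (((n-1).factorial : ℕ):ℂ)/(1-lam)^(a*n) *
        ((1-lam)^(a*n) * ((x - b*(n:ℂ))^(n-1) / (((n-1).factorial : ℕ):ℂ))) := by
    field_simp
  rw [h2, hco, Finset.mul_sum]
  refine sum_congr rfl fun l hl => ?_
  simp only [Finset.mem_range] at hl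
  rw [← perl lam ((n:ℂ)*b) hone S2 hS2v (fun q => H (a*n) q x) (n-1) (a*n) l (by omega)]
  ring
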